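/- arXiv:1903.01554 — 2 statements merged into one kernel-verified Lean document; each statement's English description precedes it below -/
import Mathlib

section
/- Fix a, b ∈ ℝ and define F : ℝ² → ℝ⁴ by F(x,y) = e^{ax - by}·(cosh x, sinh x, cos y, sin y). Then with respect to the Minkowski metric g = -dx₀² + dx₁² + dx₂² + dx₃², the induced first fundamental form of F is e^{2(ax - by)}(dx² + dy²); that is, ⟨∂ₓF, ∂ₓF⟩ = ⟨∂_yF, ∂_yF⟩ = e^{2(ax-by)} and ⟨∂ₓF, ∂_yF⟩ = 0, where ⟨u,v⟩ = -u₀v₀ + u₁v₁ + u₂v₂ + u₃v₃. -/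
noncomputable def mink (u v : Fin 4 → ℝ) : ℝ :=
  -(u 0 * v 0) + u 1 * v 1 + u 2 * v 2 + u 3 * v 3

noncomputable def Fimm (a b x y : ℝ) : Fin 4 → ℝ :=
  ![Real.exp (a * x - b * y) * Real.cosh x,
    Real.exp (a * x - b * y) * Real.sinh x,
    Real.exp (a * x - b * y) * Real.cos y,
    Real.exp (a * x - b * y) * Real.sin y]

theorem first_fundamental_form (a b x y : ℝ) :
    (let Fx : Fin 4 → ℝ := fun i => deriv (fun t => Fimm a b t y i) x
     let Fy : Fin 4 → ℝ := fun i => deriv (fun t => Fimm a b x t i) y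
     mink Fx Fx = Real.exp (2 * (a * x - b * y)) ∧
     mink Fy Fy = Real.exp (2 * (a * x - b * y)) ∧
     mink Fx Fy = 0) := by
  set E := Real.exp (a * x - b * y) with hE
  have hEx : HasDerivAt (fun t => Real.exp (a * t - b * y)) (E * a) x := by
    have h : HasDerivAt (fun t : ℝ => a * t - b * y) a x := by
      simpa using ((hasDerivAt_id x).const_mul a).sub_const (b * y)
    simpa [hE] using h.exp
  have hEy : HasDerivAt (fun t => Real.exp (a * x - b * t)) (E * (-b)) y := by
    have h : HasDerivAt (fun t : ℝ => a * x - b * t) (-b) y := by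
      simpa using ((hasDerivAt_id y).const_mul b).const_sub (a * x)
    simpa [hE] using h.exp
  have hx0 : deriv (fun t => Fimm a b t y 0) x = E * a * Real.cosh x + E * Real.sinh x := by
    simp only [Fimm, Matrix.cons_val_zero]
    exact (hEx.mul (Real.hasDerivAt_cosh x)).deriv
  have hx1 : deriv (fun t => Fimm a b t y 1) x = E * a * Real.sinh x + E * Real.cosh x := by
    simp only [Fimm, Matrix.cons_val_one, Matrix.head_cons]
    exact (hEx.mul (Real.hasDerivAt_sinh x)).deriv
  have hx2 : deriv (fun t => Fimm a b t y 2) x = E * a * Real.cos y := by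
    have h : (fun t => Fimm a b t y 2) = fun t => Real.exp (a * t - b * y) * Real.cos y := by
      funext t; simp [Fimm]
    rw [h]; simpa using (hEx.mul_const (Real.cos y)).deriv
  have hx3 : deriv (fun t => Fimm a b t y 3) x = E * a * Real.sin y := by
    have h : (fun t => Fimm a b t y 3) = fun t => Real.exp (a * t - b * y) * Real.sin y := by
      funext t; simp [Fimm]
    rw [h]; simpa using (hEx.mul_const (Real.sin y)).deriv
  have hy0 : deriv (fun t => Fimm a b x t 0) y = E * (-b) * Real.cosh x := by
    simp only [Fimm, Matrix.cons_val_zero]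
    simpa using (hEy.mul_const (Real.cosh x)).deriv
  have hy1 : deriv (fun t => Fimm a b x t 1) y = E * (-b) * Real.sinh x := by
    simp only [Fimm, Matrix.cons_val_one, Matrix.head_cons]
    simpa using (hEy.mul_const (Real.sinh x)).deriv
  have hy2 : deriv (fun t => Fimm a b x t 2) y = E * (-b) * Real.cos y + E * (-Real.sin y) := by
    have h : (fun t => Fimm a b x t 2) = fun t => Real.exp (a * x - b * t) * Real.cos t := by
      funext t; simp [Fimm]
    rw [h]; exact (hEy.mul (Real.hasDerivAt_cos y)).deriv
  have hy3 : deriv (fun t => Fimm a b x t 3) y = E * (-b) * Real.sin y + E * Real.cos y := by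
    have h : (fun t => Fimm a b x t 3) = fun t => Real.exp (a * x - b * t) * Real.sin t := by
      funext t; simp [Fimm]
    rw [h]; exact (hEy.mul (Real.hasDerivAt_sin y)).deriv
  have hexp : Real.exp (2 * (a * x - b * y)) = E * E := by
    rw [two_mul, Real.exp_add, hE]
  have hch : Real.cosh x ^ 2 - Real.sinh x ^ 2 = 1 := Real.cosh_sq_sub_sinh_sq x
  have htr : Real.sin y ^ 2 + Real.cos y ^ 2 = 1 := Real.sin_sq_add_cos_sq y
  refine ⟨?_, ?_, ?_⟩ <;>
      simp only [mink, hx0, hx1, hx2, hx3, hy0, hy1, hy2, hy3, hexp]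
  · linear_combination E * E * (1 - a ^ 2) * hch + E * E * a ^ 2 * htr
  · linear_combination -(E * E * b ^ 2) * hch + E * E * (1 + b ^ 2) * htr
  · linear_combination E * E * a * b * hch - E * E * a * b * htr
end

section
/- Let ψ ∈ ℂ with sin ψ ≠ 0, cos(ψ/2) ≠ 0, sin(ψ/2) ≠ 0. Identify ℂ⁴ with the complex quaternions ℍ^ℂ = span_ℂ{1, I, J, K} where I² = J² = K² = -1, IJ = K = -JI. Define g(z) = -cos(ψ/2)·sin(z tan(ψ/2))·1 + cos(ψ/2)·cos(z tan(ψ/2))·I + sin(ψ/2)·cos(z cot(ψ/2))·J - sin(ψ/2)·sin(z cot(ψ/2))·K. Then g'(z)·g(z)⁻¹ = cos(β)·J + sin(β)·K where β = -2z·cot(ψ) and g(z)⁻¹ = -cos(ψ/2)·sin(z tan(ψ/2))·1 - cos(ψ/2)·cos(z tan(ψ/2))·I - sin(ψ/2)·cos(z cot(ψ/2))·J + sin(ψ/2)·sin(z cot(ψ/2))·K. -/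
open Quaternion Complex

noncomputable def g0 (ψ z : ℂ) : ℂ :=
  -(Complex.cos (ψ/2) * Complex.sin (z * (Complex.sin (ψ/2) / Complex.cos (ψ/2))))
noncomputable def g1 (ψ z : ℂ) : ℂ :=
  Complex.cos (ψ/2) * Complex.cos (z * (Complex.sin (ψ/2) / Complex.cos (ψ/2)))
noncomputable def g2 (ψ z : ℂ) : ℂ :=
  Complex.sin (ψ/2) * Complex.cos (z * (Complex.cos (ψ/2) / Complex.sin (ψ/2)))
noncomputable def g3 (ψ z : ℂ) : ℂ :=
  -(Complex.sin (ψ/2) * Complex.sin (z * (Complex.cos (ψ/2) / Complex.sin (ψ/2))))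

noncomputable def gq (ψ z : ℂ) : ℍ[ℂ, -1, -1] := ⟨g0 ψ z, g1 ψ z, g2 ψ z, g3 ψ z⟩

noncomputable def gqInv (ψ z : ℂ) : ℍ[ℂ, -1, -1] :=
  ⟨g0 ψ z, -g1 ψ z, -g2 ψ z, -g3 ψ z⟩

noncomputable def gqDeriv (ψ z : ℂ) : ℍ[ℂ, -1, -1] :=
  ⟨deriv (g0 ψ) z, deriv (g1 ψ) z, deriv (g2 ψ) z, deriv (g3 ψ) z⟩

theorem gq_deriv_mul_inv (ψ : ℂ) (hψ : Complex.sin ψ ≠ 0)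
    (hc : Complex.cos (ψ/2) ≠ 0) (hs : Complex.sin (ψ/2) ≠ 0) (z : ℂ) :
    gq ψ z * gqInv ψ z = 1 ∧
    gqDeriv ψ z * gqInv ψ z =
      ⟨0, 0, Complex.cos (-2 * z * (Complex.cos ψ / Complex.sin ψ)),
        Complex.sin (-2 * z * (Complex.cos ψ / Complex.sin ψ))⟩ := by
  set c := Complex.cos (ψ/2) with hcdef
  set s := Complex.sin (ψ/2) with hsdef
  set u := z * (s / c) with hu
  set v := z * (c / s) with hv
  have key : s ^ 2 + c ^ 2 = 1 := Complex.sin_sq_add_cos_sq _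
  have hsin2 : Complex.sin ψ = 2 * s * c := by
    rw [show ψ = 2 * (ψ/2) by ring, Complex.sin_two_mul]
  have hcos2 : Complex.cos ψ = c ^ 2 - s ^ 2 := by
    rw [show ψ = 2 * (ψ/2) by ring, Complex.cos_two_mul]
    linear_combination key
  have harg : -2 * z * (Complex.cos ψ / Complex.sin ψ) = u - v := by
    rw [hsin2, hcos2, hu, hv]
    field_simp
    ring
  have h0 : deriv (g0 ψ) z = -(s * Complex.cos u) := by
    have h : HasDerivAt (g0 ψ) (-(c * (Complex.cos u * (s / c)))) z := by
      unfold g0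
      exact (((Complex.hasDerivAt_sin u).comp z (hasDerivAt_mul_const _)).const_mul c).neg
    rw [h.deriv]; field_simp
  have h1 : deriv (g1 ψ) z = -(s * Complex.sin u) := by
    have h : HasDerivAt (g1 ψ) (c * (-Complex.sin u * (s / c))) z := by
      unfold g1
      exact ((Complex.hasDerivAt_cos u).comp z (hasDerivAt_mul_const _)).const_mul c
    rw [h.deriv]; field_simp
  have h2 : deriv (g2 ψ) z = -(c * Complex.sin v) := by
    have h : HasDerivAt (g2 ψ) (s * (-Complex.sin v * (c / s))) z := by
      unfold g2
      exact ((Complex.hasDerivAt_cos v).comp z (hasDerivAt_mul_const _)).const_mul s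
    rw [h.deriv]; field_simp
  have h3 : deriv (g3 ψ) z = -(c * Complex.cos v) := by
    have h : HasDerivAt (g3 ψ) (-(s * (Complex.cos v * (c / s)))) z := by
      unfold g3
      exact (((Complex.hasDerivAt_sin v).comp z (hasDerivAt_mul_const _)).const_mul s).neg
    rw [h.deriv]; field_simp
  have hpu : Complex.sin u ^ 2 + Complex.cos u ^ 2 = 1 := Complex.sin_sq_add_cos_sq u
  have hpv : Complex.sin v ^ 2 + Complex.cos v ^ 2 = 1 := Complex.sin_sq_add_cos_sq v
  constructor
  · refine QuaternionAlgebra.ext ?_ ?_ ?_ ?_ <;>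
      simp only [gq, gqInv, g0, g1, g2, g3, ← hcdef, ← hsdef, ← hu, ← hv,
        QuaternionAlgebra.re_mul, QuaternionAlgebra.imI_mul, QuaternionAlgebra.imJ_mul,
        QuaternionAlgebra.imK_mul, QuaternionAlgebra.re_one, QuaternionAlgebra.imI_one,
        QuaternionAlgebra.imJ_one, QuaternionAlgebra.imK_one]
    · linear_combination c^2 * hpu + s^2 * hpv + key
    · ring
    · ring
    · ring
  · rw [harg, Complex.cos_sub, Complex.sin_sub]
    refine QuaternionAlgebra.ext ?_ ?_ ?_ ?_ <;>
      simp only [gqDeriv, gqInv, g0, g1, g2, g3, ← hcdef, ← hsdef, ← hu, ← hv, h0, h1, h2, h3,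
        QuaternionAlgebra.re_mul, QuaternionAlgebra.imI_mul, QuaternionAlgebra.imJ_mul,
        QuaternionAlgebra.imK_mul]
    · ring
    · linear_combination (s * c) * hpu - (s * c) * hpv
    · linear_combination (Complex.cos u * Complex.cos v + Complex.sin u * Complex.sin v) * key
    · linear_combination (Complex.sin u * Complex.cos v - Complex.cos u * Complex.sin v) * key
end
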